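/- If a principal H-bundle P over an n-dimensional manifold M admits a Cartan connection ω : TP → 𝔤 for some Lie algebra 𝔤 containing 𝔥 with dim 𝔤 = dim P, then P is geometrizable: there exists a representation ρ : H → GL(n,ℝ) such that the associated bundle P ×_H ℝⁿ is isomorphic to TM. Explicitly, the representation of H on 𝔤/𝔥 ≅ ℝⁿ induced by Ad realizes the isomorphism P ×_H (𝔤/𝔥) ≅ TM via [p, ω_p(X) mod 𝔥] ↦ π_*(X). -/
import Mathlib


open Function Module

/-- Transport of fibers of a family of modules along an equality of base points. -/
def vcast {M : Type*} (TM : M → Type*) [∀ x, AddCommGroup (TM x)] [∀ x, Module ℝ (TM x)]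
    {x y : M} (e : x = y) : TM x ≃ₗ[ℝ] TM y := by
  subst e; exact LinearEquiv.refl ℝ (TM x)

variable {H : Type*} [Group H]
variable {P M : Type*}
variable {TP : P → Type*} [∀ p, AddCommGroup (TP p)] [∀ p, Module ℝ (TP p)]
variable {TM : M → Type*} [∀ x, AddCommGroup (TM x)] [∀ x, Module ℝ (TM x)]


lemma vcast_symm_cancel {M : Type*} (TM : M → Type*) [∀ x, AddCommGroup (TM x)]
    [∀ x, Module ℝ (TM x)] {x y : M} (e : x = y) (v : TM y) :
    vcast TM e.symm (vcast TM e (vcast TM e.symm v)) = vcast TM e.symm v := by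
  subst e; rfl

lemma vcast_cancel {M : Type*} (TM : M → Type*) [∀ x, AddCommGroup (TM x)]
    [∀ x, Module ℝ (TM x)] {x y : M} (e : x = y) (v : TM x) :
    vcast TM e.symm (vcast TM e v) = v := by
  subst e; rfl

/-- If a principal `H`-bundle `P` over an `n`-dimensional manifold
`M` admits a Cartan connection `ω : TP → 𝔤` for some Lie algebra `𝔤 ⊇ 𝔥` with
`dim 𝔤 = dim P`, then `P` is geometrizable: there exists a representation
`ρ : H → GL(n,ℝ)` such that `P ×_H ℝⁿ ≅ TM`.  Explicitly, the representation of `H`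
on `𝔤/𝔥 ≅ ℝⁿ` induced by `Ad` realizes the isomorphism `P ×_H (𝔤/𝔥) ≅ TM` via
`[p, ω_p(X) mod 𝔥] ↦ π_*(X)`. -/
theorem cartan_connection_implies_geometrizable
    (n : ℕ)
    {𝔤 : Type*} [LieRing 𝔤] [LieAlgebra ℝ 𝔤] [FiniteDimensional ℝ 𝔤]
    (𝔥 : LieSubalgebra ℝ 𝔤)
    (Ad : H →* (𝔤 ≃ₗ[ℝ] 𝔤))
    (hAd : ∀ (h : H), ∀ X ∈ 𝔥.toSubmodule, Ad h X ∈ 𝔥.toSubmodule)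
    (hn : finrank ℝ (𝔤 ⧸ 𝔥.toSubmodule) = n)
    (π : P → M) (act : P → H → P)
    (hact_one : ∀ p, act p 1 = p)
    (hact_mul : ∀ p g h, act (act p g) h = act p (g * h))
    (hπ : ∀ p h, π (act p h) = π p)
    (dπ : ∀ p, TP p →ₗ[ℝ] TM (π p))
    (hdπ : ∀ p, Surjective (dπ p))
    (dR : ∀ (p : P) (h : H), TP p ≃ₗ[ℝ] TP (act p h))
    (hcompat : ∀ p h v, dπ p v = vcast TM (hπ p h) (dπ (act p h) (dR p h v)))
    -- fundamental vector fields of `𝔥`, spanning the vertical subspaces: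
    (fund : ∀ p : P, 𝔥 →ₗ[ℝ] TP p)
    (hvert : ∀ (p : P) (v : TP p), dπ p v = 0 ↔ ∃ X : 𝔥, fund p X = v)
    -- `ω` is a Cartan connection:
    (ω : ∀ p : P, TP p ≃ₗ[ℝ] 𝔤)
    (hω_equiv : ∀ (p : P) (h : H) (v : TP p), ω (act p h) (dR p h v) = Ad h⁻¹ (ω p v))
    (hω_fund : ∀ (p : P) (X : 𝔥), ω p (fund p X) = (X : 𝔤)) :
    -- `P` is geometrizable: `TM` is associated to `P` via a representation on `ℝⁿ` …
    (∃ (ρ : H →* ((Fin n → ℝ) ≃ₗ[ℝ] (Fin n → ℝ)))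
       (fib : ∀ p : P, (Fin n → ℝ) ≃ₗ[ℝ] TM (π p)),
      ∀ (p : P) (h : H) (w : Fin n → ℝ),
        fib (act p h) w = vcast TM (hπ p h).symm (fib p (ρ h w))) ∧
    -- … explicitly realized on `𝔤/𝔥` by `[p, ω_p(v) mod 𝔥] ↦ dπ_p(v)`:
    ∃ e : ∀ p : P, (𝔤 ⧸ 𝔥.toSubmodule) ≃ₗ[ℝ] TM (π p),
      (∀ (p : P) (v : TP p), e p (𝔥.toSubmodule.mkQ (ω p v)) = dπ p v) ∧
      (∀ (p : P) (h : H) (ξ : 𝔤 ⧸ 𝔥.toSubmodule),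
        vcast TM (hπ p h) (e (act p h) ξ)
          = e p (Submodule.mapQ 𝔥.toSubmodule 𝔥.toSubmodule (Ad h).toLinearMap
              (fun X hX => hAd h X hX) ξ)) := by

  classical
  have hker : ∀ p : P, 𝔥.toSubmodule ≤ LinearMap.ker ((dπ p).comp (ω p).symm.toLinearMap) := by
    intro p X hX
    simp only [LinearMap.mem_ker, LinearMap.comp_apply, LinearEquiv.coe_coe]
    refine (hvert p _).mpr ⟨⟨X, hX⟩, ?_⟩
    apply (ω p).injective
    rw [hω_fund, LinearEquiv.apply_symm_apply]
  let f : ∀ p : P, (𝔤 ⧸ 𝔥.toSubmodule) →ₗ[ℝ] TM (π p) :=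
    fun p => 𝔥.toSubmodule.liftQ ((dπ p).comp (ω p).symm.toLinearMap) (hker p)
  have hf : ∀ (p : P) (X : 𝔤), f p (𝔥.toSubmodule.mkQ X) = dπ p ((ω p).symm X) := by
    intro p X; simp [f]
  have hbij : ∀ p : P, Bijective (f p) := by
    intro p
    constructor
    · rw [injective_iff_map_eq_zero]
      intro ξ hξ
      obtain ⟨X, rfl⟩ := 𝔥.toSubmodule.mkQ_surjective ξ
      rw [hf] at hξ
      obtain ⟨Y, hY⟩ := (hvert p _).mp hξ
      have hYX : (Y : 𝔤) = X := by
        rw [← hω_fund p Y, hY, LinearEquiv.apply_symm_apply]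
      rw [Submodule.mkQ_apply, Submodule.Quotient.mk_eq_zero]
      exact hYX ▸ Y.2
    · intro t
      obtain ⟨v, hv⟩ := hdπ p t
      exact ⟨𝔥.toSubmodule.mkQ (ω p v), by rw [hf, LinearEquiv.symm_apply_apply, hv]⟩
  let e : ∀ p : P, (𝔤 ⧸ 𝔥.toSubmodule) ≃ₗ[ℝ] TM (π p) :=
    fun p => LinearEquiv.ofBijective (f p) (hbij p)
  have he : ∀ (p : P) (v : TP p), e p (𝔥.toSubmodule.mkQ (ω p v)) = dπ p v := by
    intro p v
    show f p _ = _
    rw [hf, LinearEquiv.symm_apply_apply]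
  let Aq : H → (𝔤 ⧸ 𝔥.toSubmodule) →ₗ[ℝ] (𝔤 ⧸ 𝔥.toSubmodule) :=
    fun h => Submodule.mapQ _ _ (Ad h).toLinearMap (fun X hX => hAd h X hX)
  have hAq : ∀ (h : H) (X : 𝔤), Aq h (𝔥.toSubmodule.mkQ X) = 𝔥.toSubmodule.mkQ (Ad h X) := by
    intro h X; simp [Aq, Submodule.mapQ_apply]
  have hAq_mul : ∀ (g h : H) (ξ : 𝔤 ⧸ 𝔥.toSubmodule), Aq g (Aq h ξ) = Aq (g * h) ξ := by
    intro g h ξ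
    obtain ⟨X, rfl⟩ := 𝔥.toSubmodule.mkQ_surjective ξ
    rw [hAq, hAq, hAq, map_mul]
    rfl
  have hAq_one : ∀ ξ : 𝔤 ⧸ 𝔥.toSubmodule, Aq 1 ξ = ξ := by
    intro ξ
    obtain ⟨X, rfl⟩ := 𝔥.toSubmodule.mkQ_surjective ξ
    rw [hAq, map_one]
    rfl
  have hequiv : ∀ (p : P) (h : H) (ξ : 𝔤 ⧸ 𝔥.toSubmodule),
      vcast TM (hπ p h) (e (act p h) ξ) = e p (Aq h ξ) := by
    intro p h ξ
    obtain ⟨X, rfl⟩ := 𝔥.toSubmodule.mkQ_surjective ξ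
    set w := (ω (act p h)).symm X with hw
    have hX : X = ω (act p h) w := by rw [hw, LinearEquiv.apply_symm_apply]
    set v := (dR p h).symm w with hv
    have hwv : dR p h v = w := by rw [hv, LinearEquiv.apply_symm_apply]
    have h1 : Ad h X = ω p v := by
      rw [hX, ← hwv, hω_equiv]
      calc Ad h (Ad h⁻¹ (ω p v)) = (Ad h * Ad h⁻¹) (ω p v) := rfl
        _ = ω p v := by rw [← map_mul, mul_inv_cancel, map_one]; rfl
    rw [hAq, h1, he, hX, he, hcompat p h v, hwv]
  refine ⟨?_, e, he, hequiv⟩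
  obtain ⟨b⟩ : Nonempty ((Fin n → ℝ) ≃ₗ[ℝ] (𝔤 ⧸ 𝔥.toSubmodule)) :=
    ⟨LinearEquiv.ofFinrankEq _ _ (by simp [hn])⟩
  let ρfun : H → ((Fin n → ℝ) ≃ₗ[ℝ] (Fin n → ℝ)) := fun h =>
    LinearEquiv.ofLinear
      (b.symm.toLinearMap ∘ₗ Aq h ∘ₗ b.toLinearMap)
      (b.symm.toLinearMap ∘ₗ Aq h⁻¹ ∘ₗ b.toLinearMap)
      (by
        ext w
        simp only [LinearMap.comp_apply, LinearEquiv.coe_coe, LinearMap.id_apply,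
          LinearEquiv.apply_symm_apply]
        rw [hAq_mul, mul_inv_cancel, hAq_one, LinearEquiv.symm_apply_apply])
      (by
        ext w
        simp only [LinearMap.comp_apply, LinearEquiv.coe_coe, LinearMap.id_apply,
          LinearEquiv.apply_symm_apply]
        rw [hAq_mul, inv_mul_cancel, hAq_one, LinearEquiv.symm_apply_apply])
  have hρfun : ∀ (h : H) (w : Fin n → ℝ), ρfun h w = b.symm (Aq h (b w)) := fun _ _ => rfl
  let ρ : H →* ((Fin n → ℝ) ≃ₗ[ℝ] (Fin n → ℝ)) :=
    { toFun := ρfun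
      map_one' := by
        apply LinearEquiv.ext
        intro w
        rw [hρfun, hAq_one, LinearEquiv.symm_apply_apply]
        rfl
      map_mul' := by
        intro g h
        apply LinearEquiv.ext
        intro w
        show ρfun (g * h) w = ρfun g (ρfun h w)
        rw [hρfun, hρfun, hρfun, LinearEquiv.apply_symm_apply, hAq_mul] }
  refine ⟨ρ, fun p => b.trans (e p), ?_⟩
  intro p h w
  have h1 : (b.trans (e (act p h))) w = e (act p h) (b w) := rfl
  have h2 : (b.trans (e p)) (ρ h w) = e p (Aq h (b w)) := by
    show e p (b (b.symm (Aq h (b w)))) = _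
    rw [LinearEquiv.apply_symm_apply]
  rw [h1, h2, ← hequiv p h (b w), vcast_cancel]
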